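/- arXiv:2504.10491 — 2 statements merged into one kernel-verified Lean document; each statement's English description precedes it below -/
import Mathlib

section
/- Let η_e = !![e₀+e₁, e₂; e₂, e₀−e₁] be an effect with e₀ > 0 and effect vector v_e = (e₁/e₀, e₂/e₀) satisfying ‖v_e‖ < 1, and let ρ_s be the density matrix with Bloch vector v_s, ‖v_s‖ ≤ 1. Then the Lüders post-measurement matrix satisfies η_e^{1/2} ρ_s η_e^{1/2} = e₀(1 + v_e·v_s) · ρ', where ρ' is the density matrix whose Bloch vector is the Einstein–Poincaré relativistic sum v_e ⊕ v_s := (1/(1 + v_e·v_s))·{ v_e + (1/γ)·v_s + (γ/(1+γ))·(v_e·v_s)·v_e }, with γ = 1/√(1 − ‖v_e‖²). -/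
/-- The Lorentz factor `γ = 1/√(1 − ‖u‖²)` of a vector `u = (u₁,u₂)`. -/
noncomputable def lorentzGamma (u₁ u₂ : ℝ) : ℝ :=
  1 / Real.sqrt (1 - (u₁ ^ 2 + u₂ ^ 2))

/-- First component of the Einstein–Poincaré relativistic sum `u ⊕ v`. -/
noncomputable def relSum₁ (u₁ u₂ v₁ v₂ : ℝ) : ℝ :=
  (1 / (1 + (u₁ * v₁ + u₂ * v₂))) *
    (u₁ + (1 / lorentzGamma u₁ u₂) * v₁ +
      (lorentzGamma u₁ u₂ / (1 + lorentzGamma u₁ u₂)) * (u₁ * v₁ + u₂ * v₂) * u₁)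

/-- Second component of the Einstein–Poincaré relativistic sum `u ⊕ v`. -/
noncomputable def relSum₂ (u₁ u₂ v₁ v₂ : ℝ) : ℝ :=
  (1 / (1 + (u₁ * v₁ + u₂ * v₂))) *
    (u₂ + (1 / lorentzGamma u₁ u₂) * v₂ +
      (lorentzGamma u₁ u₂ / (1 + lorentzGamma u₁ u₂)) * (u₁ * v₁ + u₂ * v₂) * u₂)

open Matrix in
lemma psd2 (p q r : ℝ) (hp : 0 < p) (hr : 0 < r) (hdet : q^2 ≤ p*r) :
    (!![p, q; q, r] : Matrix (Fin 2) (Fin 2) ℝ).PosSemidef := by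
  rw [Matrix.posSemidef_iff_dotProduct_mulVec]
  constructor
  · ext i j; fin_cases i <;> fin_cases j <;> simp [Matrix.conjTranspose_apply]
  · intro x
    have hx : (star x ⬝ᵥ (!![p, q; q, r] : Matrix (Fin 2) (Fin 2) ℝ) *ᵥ x)
        = p * x 0 ^ 2 + 2*q*(x 0 * x 1) + r * x 1 ^ 2 := by
      simp [dotProduct, Matrix.mulVec, Fin.sum_univ_two]
      ring
    rw [hx]
    nlinarith [sq_nonneg (p * x 0 + q * x 1), mul_nonneg (sub_nonneg.2 hdet) (sq_nonneg (x 1)),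
      sq_nonneg (x 1), hp.le]


lemma gamma_eq (e₀ e₁ e₂ g : ℝ) (he₀ : 0 < e₀) (hg : 0 < g)
    (h4 : g^2 = e₀^2 - (e₁^2+e₂^2)) :
    lorentzGamma (e₁/e₀) (e₂/e₀) = e₀/g := by
  have h : 1 - ((e₁/e₀)^2 + (e₂/e₀)^2) = (g/e₀)^2 := by
    field_simp
    linear_combination -h4
  rw [lorentzGamma, h, Real.sqrt_sq (by positivity), one_div_div]

lemma W1 (e₀ e₁ e₂ s₁ s₂ g : ℝ) (he₀ : 0 < e₀) (hg : 0 < g)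
    (h4 : g^2 = e₀^2 - (e₁^2+e₂^2)) (hd : 0 < e₀ + (e₁*s₁+e₂*s₂)) :
    relSum₁ (e₁/e₀) (e₂/e₀) s₁ s₂
      = (e₁ + g*s₁ + (e₁*s₁+e₂*s₂)*e₁/(e₀+g)) / (e₀ + (e₁*s₁+e₂*s₂)) := by
  rw [relSum₁, gamma_eq e₀ e₁ e₂ g he₀ hg h4]
  have h1 : 1 + (e₁/e₀*s₁ + e₂/e₀*s₂) = (e₀ + (e₁*s₁+e₂*s₂))/e₀ := by field_simp
  have h2 : 1 + e₀/g = (e₀+g)/g := by field_simp; ring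
  rw [h1, h2]
  have hpg : (0:ℝ) < e₀ + g := by linarith
  field_simp

lemma W2 (e₀ e₁ e₂ s₁ s₂ g : ℝ) (he₀ : 0 < e₀) (hg : 0 < g)
    (h4 : g^2 = e₀^2 - (e₁^2+e₂^2)) (hd : 0 < e₀ + (e₁*s₁+e₂*s₂)) :
    relSum₂ (e₁/e₀) (e₂/e₀) s₁ s₂
      = (e₂ + g*s₂ + (e₁*s₁+e₂*s₂)*e₂/(e₀+g)) / (e₀ + (e₁*s₁+e₂*s₂)) := by
  rw [relSum₂, gamma_eq e₀ e₁ e₂ g he₀ hg h4]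
  have h1 : 1 + (e₁/e₀*s₁ + e₂/e₀*s₂) = (e₀ + (e₁*s₁+e₂*s₂))/e₀ := by field_simp
  have h2 : 1 + e₀/g = (e₀+g)/g := by field_simp; ring
  rw [h1, h2]
  have hpg : (0:ℝ) < e₀ + g := by linarith
  field_simp

lemma h11_of (e₀ e₁ g α β : ℝ) (hα : 2*α^2 = e₀+g) (h1 : 2*(α*β)*e₁ = e₁) :
    2*(e₀+g)*(β*e₁)^2 = e₁^2 := by
  linear_combination (2*α*β*e₁ + e₁) * h1 - 2*(β*e₁)^2 * hα

lemma h12_of (e₀ e₁ e₂ g α β : ℝ) (hα : 2*α^2 = e₀+g) (h1 : 2*(α*β)*e₁ = e₁)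
    (h2 : 2*(α*β)*e₂ = e₂) :
    2*(e₀+g)*((β*e₁)*(β*e₂)) = e₁*e₂ := by
  linear_combination (2*α*β*e₂) * h1 + e₁ * h2 - 2*(β^2*e₁*e₂) * hα

lemma entryA (e₀ e₁ e₂ s₁ s₂ g α β : ℝ)
    (hα : 2*α^2 = e₀+g) (h1 : 2*(α*β)*e₁ = e₁) (h2 : 2*(α*β)*e₂ = e₂)
    (h11 : 2*(e₀+g)*(β*e₁)^2 = e₁^2) (h12 : 2*(e₀+g)*((β*e₁)*(β*e₂)) = e₁*e₂)
    (h22 : 2*(e₀+g)*(β*e₂)^2 = e₂^2)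
    (h4 : g^2 = e₀^2 - (e₁^2+e₂^2)) :
    ((α+β*e₁)^2*(1+s₁) + 2*((α+β*e₁)*(β*e₂))*s₂ + (β*e₂)^2*(1-s₁)) * (e₀+g)
      = (e₀ + (e₁*s₁+e₂*s₂) + e₁ + g*s₁)*(e₀+g) + (e₁*s₁+e₂*s₂)*e₁ := by
  linear_combination ((1+s₁)*(e₀+g)/2) * hα + ((1+s₁)*(e₀+g)) * h1 + (s₂*(e₀+g)) * h2
    + ((1+s₁)/2) * h11 + s₂ * h12 + ((1-s₁)/2) * h22 + ((1-s₁)/2) * h4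

lemma entryB (e₀ e₁ e₂ s₁ s₂ g α β : ℝ)
    (hα : 2*α^2 = e₀+g) (h1 : 2*(α*β)*e₁ = e₁) (h2 : 2*(α*β)*e₂ = e₂)
    (h11 : 2*(e₀+g)*(β*e₁)^2 = e₁^2) (h12 : 2*(e₀+g)*((β*e₁)*(β*e₂)) = e₁*e₂)
    (h22 : 2*(e₀+g)*(β*e₂)^2 = e₂^2)
    (h4 : g^2 = e₀^2 - (e₁^2+e₂^2)) :
    (2*(α*(β*e₂)) + 2*s₁*((β*e₁)*(β*e₂)) + s₂*(α^2 - (β*e₁)^2 + (β*e₂)^2)) * (e₀+g)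
      = (e₂ + g*s₂)*(e₀+g) + (e₁*s₁+e₂*s₂)*e₂ := by
  linear_combination (e₀+g) * h2 + s₁ * h12 + (s₂*(e₀+g)/2) * hα
    - (s₂/2) * h11 + (s₂/2) * h22 - (s₂/2) * h4

lemma key (e₀ e₁ e₂ s₁ s₂ g α β : ℝ) (he₀ : 0 < e₀) (hg : 0 < g)
    (h4 : g^2 = e₀^2 - (e₁^2+e₂^2))
    (hα : 2*α^2 = e₀+g) (h1 : 2*(α*β)*e₁ = e₁) (h2 : 2*(α*β)*e₂ = e₂)
    (hd : 0 < e₀ + (e₁*s₁+e₂*s₂)) :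
    !![α+β*e₁, β*e₂; β*e₂, α-β*e₁] * ((1 / 2 : ℝ) • !![1 + s₁, s₂; s₂, 1 - s₁]) *
        !![α+β*e₁, β*e₂; β*e₂, α-β*e₁] =
      (e₀ * (1 + ((e₁ / e₀) * s₁ + (e₂ / e₀) * s₂))) •
        ((1 / 2 : ℝ) •
          !![1 + relSum₁ (e₁ / e₀) (e₂ / e₀) s₁ s₂,
              relSum₂ (e₁ / e₀) (e₂ / e₀) s₁ s₂;
              relSum₂ (e₁ / e₀) (e₂ / e₀) s₁ s₂,
              1 - relSum₁ (e₁ / e₀) (e₂ / e₀) s₁ s₂]) := by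
  have h11 := h11_of e₀ e₁ g α β hα h1
  have h22 := h11_of e₀ e₂ g α β hα h2
  have h12 := h12_of e₀ e₁ e₂ g α β hα h1 h2
  have hpg : (0:ℝ) < e₀ + g := by linarith
  have hK : e₀ * (1 + ((e₁ / e₀) * s₁ + (e₂ / e₀) * s₂)) = e₀ + (e₁*s₁+e₂*s₂) := by
    field_simp
  have hA := entryA e₀ e₁ e₂ s₁ s₂ g α β hα h1 h2 h11 h12 h22 h4
  have hA' := entryA e₀ (-e₁) e₂ (-s₁) s₂ g α β hα (by linarith) h2
      (by linear_combination h11) (by linear_combination -h12) h22 (by linear_combination h4)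
  have hB := entryB e₀ e₁ e₂ s₁ s₂ g α β hα h1 h2 h11 h12 h22 h4
  set w₁ := relSum₁ (e₁ / e₀) (e₂ / e₀) s₁ s₂ with hw₁
  set w₂ := relSum₂ (e₁ / e₀) (e₂ / e₀) s₁ s₂ with hw₂
  have hW1 : w₁ = (e₁ + g*s₁ + (e₁*s₁+e₂*s₂)*e₁/(e₀+g)) / (e₀ + (e₁*s₁+e₂*s₂)) :=
    W1 e₀ e₁ e₂ s₁ s₂ g he₀ hg h4 hd
  have hW2 : w₂ = (e₂ + g*s₂ + (e₁*s₁+e₂*s₂)*e₂/(e₀+g)) / (e₀ + (e₁*s₁+e₂*s₂)) :=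
    W2 e₀ e₁ e₂ s₁ s₂ g he₀ hg h4 hd
  rw [hK]
  ext i j
  fin_cases i <;> fin_cases j <;>
    simp only [Matrix.mul_apply, Fin.sum_univ_two, Matrix.smul_apply,
      Matrix.cons_val', Matrix.cons_val_zero, Matrix.cons_val_one, Matrix.head_cons,
      Matrix.head_fin_const, Matrix.empty_val', Matrix.cons_val_fin_one, smul_eq_mul,
      Matrix.of_apply, Fin.zero_eta, Fin.mk_one]
  · rw [hW1]
    field_simp
    linear_combination hA
  · rw [hW2]
    field_simp
    linear_combination hB
  · rw [hW2]
    have hd2 : e₀ + (s₁ * e₁ + e₂ * s₂) ≠ 0 := by linarith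
    field_simp
    linear_combination hB
  · rw [hW1]
    have hd2 : e₀ + (s₁ * e₁ + e₂ * s₂) ≠ 0 := by linarith
    field_simp
    linear_combination hA'

set_option maxHeartbeats 1000000 in
theorem luders_aux (e₀ e₁ e₂ s₁ s₂ : ℝ) (he₀ : 0 < e₀)
    (η q : Matrix (Fin 2) (Fin 2) ℝ)
    (hη : η = !![e₀ + e₁, e₂; e₂, e₀ - e₁])
    (hve : (e₁ / e₀) ^ 2 + (e₂ / e₀) ^ 2 < 1)
    (hq : q.PosSemidef) (hq2 : q * q = η)
    (hs : s₁ ^ 2 + s₂ ^ 2 ≤ 1) :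
    ∃ α β g : ℝ, 0 < g ∧ g^2 = e₀^2 - (e₁^2+e₂^2) ∧ 2*α^2 = e₀+g ∧
      2*(α*β)*e₁ = e₁ ∧ 2*(α*β)*e₂ = e₂ ∧ (0 < e₀ + (e₁*s₁+e₂*s₂)) ∧
      q = !![α+β*e₁, β*e₂; β*e₂, α-β*e₁] := by
  have hve' : e₁^2 + e₂^2 < e₀^2 := by
    rw [div_pow, div_pow, ← add_div, div_lt_one (by positivity)] at hve
    exact hve
  have hd : 0 < e₀ + (e₁*s₁+e₂*s₂) := by
    nlinarith [sq_nonneg (e₁*s₂ - e₂*s₁), sq_nonneg (e₁*s₁ + e₂*s₂),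
      mul_nonneg (by positivity : (0:ℝ) ≤ e₁^2+e₂^2) (sub_nonneg.2 hs)]
  set r := Real.sqrt (e₁^2+e₂^2) with hrdef
  have hrnn : 0 ≤ r := Real.sqrt_nonneg _
  have hr2 : r^2 = e₁^2+e₂^2 := Real.sq_sqrt (by positivity)
  have hrlt : r < e₀ := by nlinarith
  set a := Real.sqrt (e₀+r) with hadef
  set b := Real.sqrt (e₀-r) with hbdef
  have ha2 : a^2 = e₀+r := Real.sq_sqrt (by linarith)
  have hb2 : b^2 = e₀-r := Real.sq_sqrt (by linarith)
  have ha : 0 < a := Real.sqrt_pos.2 (by linarith)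
  have hb : 0 < b := Real.sqrt_pos.2 (by linarith)
  clear_value a b
  clear_value r
  have habp : 0 < a + b := by linarith
  have habne : a + b ≠ 0 := habp.ne'
  have hg2 : (a*b)^2 = e₀^2 - (e₁^2+e₂^2) := by
    linear_combination b^2*ha2 + (e₀+r)*hb2 - hr2
  have hgpos : 0 < a*b := mul_pos ha hb
  have he1r : -r ≤ e₁ ∧ e₁ ≤ r := by
    constructor <;> nlinarith [hr2, hrnn, sq_nonneg e₂, sq_nonneg (e₁+r), sq_nonneg (e₁-r)]
  refine ⟨(a+b)/2, 1/(a+b), a*b, hgpos, hg2,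
    by linear_combination (1/2)*ha2 + (1/2)*hb2,
    by field_simp, by field_simp, hd, ?_⟩
  -- the square-root matrix
  have hE : ((a+b)/2)^2 + (1/(a+b))^2*(e₁^2+e₂^2) = e₀ := by
    field_simp
    linear_combination (a^2+b^2-2*e₀+4*a*b)*ha2 + (a^2+b^2-2*e₀+4*a*b)*hb2 + 4*hg2
  have hp1 : 0 < (a+b)/2 + 1/(a+b)*e₁ := by
    have h : (a+b)/2 + 1/(a+b)*e₁ = (e₀ + a*b + e₁)/(a+b) := by
      field_simp
      linear_combination ha2 + hb2
    rw [h]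
    apply div_pos (by nlinarith) habp
  have hp2 : 0 < (a+b)/2 - 1/(a+b)*e₁ := by
    have h : (a+b)/2 - 1/(a+b)*e₁ = (e₀ + a*b - e₁)/(a+b) := by
      field_simp
      linear_combination ha2 + hb2
    rw [h]
    apply div_pos (by nlinarith) habp
  have hdet : (1/(a+b)*e₂)^2 ≤ ((a+b)/2 + 1/(a+b)*e₁) * ((a+b)/2 - 1/(a+b)*e₁) := by
    have h : ((a+b)/2 + 1/(a+b)*e₁) * ((a+b)/2 - 1/(a+b)*e₁) - (1/(a+b)*e₂)^2
        = (((a+b)/2)^2 + (1/(a+b))^2*(e₁^2+e₂^2)) - 2*(1/(a+b))^2*(e₁^2+e₂^2) := by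
      ring
    nlinarith [hE, mul_nonneg ha.le hb.le, sq_nonneg (1/(a+b)), hr2,
      mul_nonneg (sq_nonneg (1/(a+b))) (by positivity : (0:ℝ) ≤ e₁^2+e₂^2)]
  have hpsd := psd2 _ _ _ hp1 hp2 hdet
  open scoped MatrixOrder in refine (CFC.sq_eq_sq_iff q _ hq.nonneg hpsd.nonneg).1 ?_
  rw [pow_two, pow_two, hq2, hη]
  ext i j
  fin_cases i <;> fin_cases j <;>
    simp only [Matrix.mul_apply, Fin.sum_univ_two, Matrix.cons_val', Matrix.cons_val_zero,
      Matrix.cons_val_one, Matrix.head_cons, Matrix.empty_val', Matrix.cons_val_fin_one,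
      Matrix.head_fin_const, Matrix.of_apply, Fin.zero_eta, Fin.mk_one] <;>
    field_simp
  · linear_combination (-(4*a*b + a^2 + b^2 - 2*e₀))*ha2 + (-(4*a*b + a^2 + b^2 - 2*e₀))*hb2 - 4*hg2
  · ring
  · ring
  · linear_combination (-(4*a*b + a^2 + b^2 - 2*e₀))*ha2 + (-(4*a*b + a^2 + b^2 - 2*e₀))*hb2 - 4*hg2


/-- The Lüders operation of an effect `η_e` (with `e₀ > 0`, `‖v_e‖ < 1`) on a density
matrix `ρ_s` yields `e₀(1 + v_e·v_s)` times the density matrix whose Bloch vector is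
the Einstein–Poincaré relativistic sum `v_e ⊕ v_s`. -/
theorem luders_relativistic_sum (e₀ e₁ e₂ s₁ s₂ : ℝ) (he₀ : 0 < e₀)
    (η q : Matrix (Fin 2) (Fin 2) ℝ)
    (hη : η = !![e₀ + e₁, e₂; e₂, e₀ - e₁])
    (hps : η.PosSemidef)
    (hps' : ((1 : Matrix (Fin 2) (Fin 2) ℝ) - η).PosSemidef)
    (hve : (e₁ / e₀) ^ 2 + (e₂ / e₀) ^ 2 < 1)
    (hq : q.PosSemidef) (hq2 : q * q = η)
    (hs : s₁ ^ 2 + s₂ ^ 2 ≤ 1) :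
    q * ((1 / 2 : ℝ) • !![1 + s₁, s₂; s₂, 1 - s₁]) * q =
      (e₀ * (1 + ((e₁ / e₀) * s₁ + (e₂ / e₀) * s₂))) •
        ((1 / 2 : ℝ) •
          !![1 + relSum₁ (e₁ / e₀) (e₂ / e₀) s₁ s₂,
              relSum₂ (e₁ / e₀) (e₂ / e₀) s₁ s₂;
              relSum₂ (e₁ / e₀) (e₂ / e₀) s₁ s₂,
              1 - relSum₁ (e₁ / e₀) (e₂ / e₀) s₁ s₂]) := by
  obtain ⟨α, β, g, hgpos, hg2, hα, h1, h2, hd, hqeq⟩ :=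
    luders_aux e₀ e₁ e₂ s₁ s₂ he₀ η q hη hve hq hq2 hs
  rw [hqeq]
  exact key e₀ e₁ e₂ s₁ s₂ g α β he₀ hgpos hg2 hα h1 h2 hd
end

section
/- Let η_e = !![e₀+e₁, e₂; e₂, e₀−e₁] be an effect with e₀ > 0, v_e = (e₁/e₀, e₂/e₀), ‖v_e‖ < 1 and γ = 1/√(1 − ‖v_e‖²), and let ρ_s be a density matrix with Bloch vector v_s = (s₁,s₂). Writing χ(M) = (m₀, m₁, m₂) ∈ ℝ³ for a symmetric matrix M = !![m₀+m₁, m₂; m₂, m₀−m₁], the Lüders operation is a normalized Lorentz boost: χ(η_e^{1/2} ρ_s η_e^{1/2}) = (e₀/γ) · B(v_e) · (1/2)·(1, s₁, s₂)ᵗ, where B(v_e) is the 3×3 Lorentz boost matrix with block form [[γ, γ v_eᵗ], [γ v_e, Id₂ + (γ²/(1+γ))·v_e v_eᵗ]]. -/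
open Matrix

/-- The linear isomorphism `χ : H(2,ℝ) → ℝ³`,
`!![m₀+m₁, m₂; m₂, m₀−m₁] ↦ (m₀, m₁, m₂)`. -/
noncomputable def chi (M : Matrix (Fin 2) (Fin 2) ℝ) : Fin 3 → ℝ :=
  ![(M 0 0 + M 1 1) / 2, (M 0 0 - M 1 1) / 2, M 0 1]

/-- The 3×3 Lorentz boost matrix `B(u)` in the direction `u = (u₁,u₂)`. -/
noncomputable def boost (u₁ u₂ : ℝ) : Matrix (Fin 3) (Fin 3) ℝ :=
  !![lorentzGamma u₁ u₂, lorentzGamma u₁ u₂ * u₁, lorentzGamma u₁ u₂ * u₂;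
     lorentzGamma u₁ u₂ * u₁,
       1 + (lorentzGamma u₁ u₂ ^ 2 / (1 + lorentzGamma u₁ u₂)) * (u₁ * u₁),
       (lorentzGamma u₁ u₂ ^ 2 / (1 + lorentzGamma u₁ u₂)) * (u₁ * u₂);
     lorentzGamma u₁ u₂ * u₂,
       (lorentzGamma u₁ u₂ ^ 2 / (1 + lorentzGamma u₁ u₂)) * (u₂ * u₁),
       1 + (lorentzGamma u₁ u₂ ^ 2 / (1 + lorentzGamma u₁ u₂)) * (u₂ * u₂)]

set_option maxHeartbeats 2000000 in
/-- The Lüders operation of an effect is a normalized Lorentz boost: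
`χ(η_e^{1/2} ρ_s η_e^{1/2}) = (e₀/γ)·B(v_e)·(1/2)(1, s₁, s₂)ᵗ`. -/
theorem luders_is_normalized_boost (e₀ e₁ e₂ s₁ s₂ : ℝ) (he₀ : 0 < e₀)
    (η q : Matrix (Fin 2) (Fin 2) ℝ)
    (hη : η = !![e₀ + e₁, e₂; e₂, e₀ - e₁])
    (hps : η.PosSemidef)
    (hps' : ((1 : Matrix (Fin 2) (Fin 2) ℝ) - η).PosSemidef)
    (hve : (e₁ / e₀) ^ 2 + (e₂ / e₀) ^ 2 < 1)
    (hq : q.PosSemidef) (hq2 : q * q = η)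
    (hs : s₁ ^ 2 + s₂ ^ 2 ≤ 1) :
    chi (q * ((1 / 2 : ℝ) • !![1 + s₁, s₂; s₂, 1 - s₁]) * q) =
      (e₀ / lorentzGamma (e₁ / e₀) (e₂ / e₀)) •
        (boost (e₁ / e₀) (e₂ / e₀) *ᵥ ((1 / 2 : ℝ) • ![1, s₁, s₂])) := by

  have hsym : q 1 0 = q 0 1 := by
    have h := hq.1
    have := congrFun (congrFun h 1) 0
    simpa [Matrix.conjTranspose_apply] using this.symm
  set a := q 0 0 with ha
  set b := q 0 1 with hb
  set c := q 1 1 with hc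
  have hqm : q = !![a, b; b, c] := by
    ext i j
    fin_cases i <;> fin_cases j <;>
      simp [ha, hb, hc, hsym]
  subst hη
  rw [hqm, Matrix.mul_fin_two] at hq2
  have E1 : a * a + b * b = e₀ + e₁ := by
    have := congrFun (congrFun hq2 0) 0; simpa using this
  have E2 : a * b + b * c = e₂ := by
    have := congrFun (congrFun hq2 0) 1; simpa using this
  have E3 : b * b + c * c = e₀ - e₁ := by
    have := congrFun (congrFun hq2 1) 1; simpa using this

  have h2e : e₁ ^ 2 + e₂ ^ 2 < e₀ ^ 2 := by
    have h := hve
    rw [div_pow, div_pow, ← add_div, div_lt_one (by positivity)] at h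
    exact h
  set D := Real.sqrt (e₀ ^ 2 - e₁ ^ 2 - e₂ ^ 2) with hD
  have hD2 : D ^ 2 = e₀ ^ 2 - e₁ ^ 2 - e₂ ^ 2 := Real.sq_sqrt (by linarith)
  have hDpos : 0 < D := Real.sqrt_pos.2 (by linarith)
  have hA : 0 ≤ a := by
    have h := hq.dotProduct_mulVec_nonneg ![1, 0]
    rw [hqm] at h
    simpa [Matrix.mulVec, dotProduct, Fin.sum_univ_two] using h
  have hC : 0 ≤ c := by
    have h := hq.dotProduct_mulVec_nonneg ![0, 1]
    rw [hqm] at h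
    simpa [Matrix.mulVec, dotProduct, Fin.sum_univ_two] using h
  have hdet_nn : 0 ≤ a * c - b * b := by
    rcases eq_or_lt_of_le (add_nonneg hA hC) with ht | ht
    · have ha0 : a = 0 := by linarith
      have hc0 : c = 0 := by linarith
      have h3 := hq.dotProduct_mulVec_nonneg ![1, -1]
      rw [hqm] at h3
      simp [Matrix.mulVec, dotProduct, Fin.sum_univ_two] at h3
      have h4 := hq.dotProduct_mulVec_nonneg ![1, 1]
      rw [hqm] at h4
      simp [Matrix.mulVec, dotProduct, Fin.sum_univ_two] at h4
      nlinarith [h3, h4]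
    · have h1 := hq.dotProduct_mulVec_nonneg ![b, -a]
      rw [hqm] at h1
      simp [Matrix.mulVec, dotProduct, Fin.sum_univ_two] at h1
      have h2 := hq.dotProduct_mulVec_nonneg ![c, -b]
      rw [hqm] at h2
      simp [Matrix.mulVec, dotProduct, Fin.sum_univ_two] at h2
      nlinarith [h1, h2, ht]
  have hdet : a * c - b * b = D := by
    have hsq : (a * c - b * b) ^ 2 = D ^ 2 := by
      rw [hD2]
      linear_combination (b * b + c * c) * E1 + (e₀ + e₁) * E3 - (a * b + b * c + e₂) * E2
    have h0 : (a * c - b * b - D) * (a * c - b * b + D) = 0 := by linear_combination hsq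
    rcases mul_eq_zero.1 h0 with h | h
    · linarith
    · linarith
  have ht2 : (a + c) ^ 2 = 2 * e₀ + 2 * D := by linear_combination E1 + E3 + 2 * hdet
  have htpos : 0 < a + c := by nlinarith [hA, hC, ht2, hdet, hDpos, he₀]
  have hact : (a - c) * (a + c) = 2 * e₁ := by linear_combination E1 - E3
  have hb2 : 2 * (b * b) * (e₀ + D) = e₂ ^ 2 := by
    linear_combination (a * b + b * c + e₂) * E2 - b * b * ht2
  have hbac : b * (a - c) * (e₀ + D) = e₁ * e₂ := by
    linear_combination (b * (a + c) / 2) * hact + e₁ * E2 - (b * (a - c) / 2) * ht2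
  have h1 : (e₀ - 2 * (b * b)) * (e₀ + D) = D * (e₀ + D) + e₁ ^ 2 := by
    linear_combination -hb2 - hD2
  have h2 : (b * b + a * c) * (e₀ + D) = D * (e₀ + D) + e₂ ^ 2 := by
    linear_combination (e₀ + D) * hdet + hb2

  have he₀' : e₀ ≠ 0 := ne_of_gt he₀
  have hγ : lorentzGamma (e₁ / e₀) (e₂ / e₀) = e₀ / D := by
    unfold lorentzGamma
    rw [show (1 : ℝ) - ((e₁ / e₀) ^ 2 + (e₂ / e₀) ^ 2) = (D / e₀) ^ 2 by
      field_simp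
      linear_combination -hD2]
    rw [Real.sqrt_sq (by positivity), one_div_div]
  clear_value a b c
  clear hq hq2 hps hps' hsym ha hb hc hs hve
  have hP : ((1 / 2 : ℝ) • !![1 + s₁, s₂; s₂, 1 - s₁]) =
      !![(1 + s₁) / 2, s₂ / 2; s₂ / 2, (1 - s₁) / 2] := by
    ext i j
    fin_cases i <;> fin_cases j <;> simp <;> ring
  rw [hqm, hP, Matrix.mul_fin_two, Matrix.mul_fin_two]
  funext i
  fin_cases i <;>
    simp [chi, boost, hγ, Matrix.mulVec, dotProduct, Fin.sum_univ_three]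
  have hDe : D + e₀ ≠ 0 := by positivity
  all_goals field_simp
  · linear_combination (1+s₁)*E1 + (1-s₁)*E3 + 2*s₂*E2
  · linear_combination (e₀+D)*(1+s₁)*E1 - (e₀+D)*(1-s₁)*E3 + 2*s₁*h1 + 2*s₂*hbac
  · linear_combination (e₀+D)*E2 + s₁*hbac + s₂*h2
end
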